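/- Let 0 < α ≤ 1, β < 0, γ ∈ ℝ, 0 < ν ≤ 1 and λ > 0. For every t > 0, the SSTFPP state probabilities sum to one: Σ_{n=0}^∞ p^{α,β,γ}_ν(n,t) = 1. -/

import Mathlib

open Real Finset

/-- Coefficients `C_k = ∏_{j=1}^k Γ(1+γ-jβ)/Γ(1+γ+α-(j-1)β)`. -/
noncomputable def Ccoef (α β γ : ℝ) (k : ℕ) : ℝ :=
  ∏ j ∈ Finset.range k,
    Real.Gamma (1 + γ - ((j : ℝ) + 1) * β) / Real.Gamma (1 + γ + α - (j : ℝ) * β)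

/-- State probabilities of the Saigo space and time fractional Poisson process. -/
noncomputable def pSS (α β γ ν lam : ℝ) (n : ℕ) (t : ℝ) : ℝ :=
  ((-1) ^ n / n.factorial) * ∑' k : ℕ,
    Ccoef α β γ k * (-(lam ^ ν) * t ^ (-β)) ^ k / Real.Gamma (1 - (k : ℝ) * β) *
      (Real.Gamma ((k : ℝ) * ν + 1) / Real.Gamma ((k : ℝ) * ν + 1 - n))


section SSTFPPaux
open Filter

noncomputable def bin (s : ℝ) (n : ℕ) : ℝ := (∏ i ∈ range n, (s - i)) / n.factorial

lemma bin_zero (s : ℝ) : bin s 0 = 1 := by simp [bin]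

lemma bin_succ (s : ℝ) (n : ℕ) : bin s (n+1) = bin s n * ((s - n)/(n+1)) := by
  rw [bin, bin, prod_range_succ, Nat.factorial_succ, div_mul_div_comm]
  push_cast; ring

lemma Gamma_ratio (s : ℝ) (hs : 0 ≤ s) (n : ℕ) :
    Real.Gamma (s+1) / Real.Gamma (s+1-n) = ∏ i ∈ range n, (s - i) := by
  induction n with
  | zero => simp [Real.Gamma_pos_of_pos (by linarith : (0:ℝ) < s + 1) |>.ne']
  | succ n ih =>
    have hcast : s + 1 - ((n:ℝ)+1) = s + 1 - ((n+1 : ℕ) : ℝ) := by push_cast; ring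
    rw [prod_range_succ, ← ih]
    by_cases hz : Real.Gamma (s+1-n) = 0
    · rcases (Real.Gamma_eq_zero_iff _).1 hz with ⟨m, hm⟩
      have hz' : Real.Gamma (s+1-((n+1:ℕ):ℝ)) = 0 := by
        rw [Real.Gamma_eq_zero_iff]
        exact ⟨m+1, by push_cast; push_cast at hm; linarith⟩
      rw [hz, hz']
      simp
    · by_cases hsn : s - n = 0
      · have hz' : Real.Gamma (s+1-((n+1:ℕ):ℝ)) = 0 := by
          rw [Real.Gamma_eq_zero_iff]; exact ⟨0, by push_cast; linarith [hsn]⟩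
        rw [hz', div_zero, hsn, mul_zero]
      · have key : Real.Gamma (s+1-n) = (s-n) * Real.Gamma (s+1-((n+1:ℕ):ℝ)) := by
          have h3 : s+1-(n:ℝ) = (s+1-((n+1:ℕ):ℝ)) + 1 := by push_cast; ring
          rw [h3, Real.Gamma_add_one (by push_cast; intro h; apply hsn; linarith)]
          congr 1
          push_cast; ring
        have hz2 : Real.Gamma (s+1-((n+1:ℕ):ℝ)) ≠ 0 := by
          intro h; apply hz; rw [key, h, mul_zero]
        rw [key, mul_comm (s-(n:ℝ)), ← div_div, div_mul_cancel₀ _ hsn]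

noncomputable def Q (s : ℝ) (N : ℕ) : ℝ := ∏ j ∈ range N, ((j:ℝ)+1-s)/((j:ℝ)+1)

lemma Q_succ (s : ℝ) (N : ℕ) : Q s (N+1) = Q s N * (((N:ℝ)+1-s)/((N:ℝ)+1)) := by
  rw [Q, prod_range_succ, ← Q]

lemma neg_bin (s : ℝ) : ∀ N : ℕ, (-1:ℝ)^(N+1) * bin s (N+1) = (-s/((N:ℝ)+1)) * Q s N := by
  intro N
  induction N with
  | zero => simp [bin_succ, bin_zero, Q]
  | succ N ih =>
    rw [bin_succ s (N+1), pow_succ, Q_succ]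
    push_cast
    rw [mul_comm ((-1:ℝ)^(N+1)) (-1), mul_assoc, ← mul_assoc ((-1:ℝ)^(N+1)), ih]
    ring

lemma sum_bin_eq_Q (s : ℝ) (N : ℕ) :
    ∑ n ∈ range (N+1), (-1:ℝ)^n * bin s n = Q s N := by
  induction N with
  | zero => simp [bin_zero, Q]
  | succ N ih =>
    rw [sum_range_succ, ih, neg_bin, Q_succ]
    have h : ((N:ℝ)+1) ≠ 0 := by positivity
    field_simp
    ring


lemma pow_div_factorial_le_exp' (x : ℝ) (hx : 0 ≤ x) (n : ℕ) : x^n / n.factorial ≤ exp x :=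
  Real.pow_div_factorial_le_exp x hx n

lemma abs_bin_le (s : ℝ) (hs : 0 ≤ s) {n : ℕ} (hn : n ≤ Nat.floor s + 1) :
    |bin s n| ≤ s^n / n.factorial := by
  rw [bin, abs_div, abs_of_pos (by positivity : (0:ℝ) < (n.factorial:ℝ))]
  gcongr
  calc |∏ i ∈ range n, (s - i)| ≤ ∏ i ∈ range n, |s - (i:ℝ)| := by
        rw [Finset.abs_prod]
    _ ≤ ∏ i ∈ range n, s := by
        apply Finset.prod_le_prod (fun i _ => abs_nonneg _)
        intro i hi
        rw [mem_range] at hi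
        have hi' : (i:ℝ) ≤ s := by
          have : i ≤ Nat.floor s := by omega
          calc (i:ℝ) ≤ (Nat.floor s : ℝ) := by exact_mod_cast this
            _ ≤ s := Nat.floor_le hs
        rw [abs_of_nonneg (by linarith)]
        linarith
    _ = s^n := by rw [prod_const, card_range]

lemma abs_Q_le (s : ℝ) (hs : 0 ≤ s) (N : ℕ) : |Q s N| ≤ exp (s+1) := by
  set M := Nat.floor s with hM
  have hg : ∀ j ∈ range N, |((j:ℝ)+1-s)/((j:ℝ)+1)| ≤ (if j < M then (s+1)/((j:ℝ)+1) else 1) := by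
    intro j _
    by_cases hj : j < M
    · simp only [hj, if_true]
      rw [abs_div, abs_of_pos (by positivity : (0:ℝ) < (j:ℝ)+1)]
      gcongr
      rw [abs_le]
      have : (j:ℝ) + 1 ≤ s := by
        have : j + 1 ≤ Nat.floor s := by omega
        calc (j:ℝ)+1 = ((j+1 : ℕ):ℝ) := by push_cast; ring
          _ ≤ (Nat.floor s : ℝ) := by exact_mod_cast this
          _ ≤ s := Nat.floor_le hs
      constructor <;> linarith
    · simp only [hj, if_false]
      have hjs : s ≤ (j:ℝ) + 1 := by
        have : Nat.floor s ≤ j := by omega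
        have h2 : s < Nat.floor s + 1 := Nat.lt_floor_add_one s
        have : (Nat.floor s : ℝ) ≤ (j:ℝ) := by exact_mod_cast this
        linarith
      rw [abs_div, abs_of_nonneg (by linarith : (0:ℝ) ≤ (j:ℝ)+1-s),
        abs_of_nonneg (by positivity : (0:ℝ) ≤ (j:ℝ)+1), div_le_one (by positivity)]
      linarith
  have h1 : |Q s N| ≤ ∏ j ∈ range N, (if j < M then (s+1)/((j:ℝ)+1) else 1) := by
    rw [Q, Finset.abs_prod]
    exact Finset.prod_le_prod (fun j _ => abs_nonneg _) hg
  have hprod : ∀ K, K ≤ M → ∏ j ∈ range K, ((s+1)/((j:ℝ)+1)) = (s+1)^K / K.factorial := by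
    intro K _
    rw [Finset.prod_div_distrib, prod_const, card_range]
    congr 1
    exact_mod_cast Finset.prod_range_add_one_eq_factorial K
  have hexp : ∀ K : ℕ, (s+1)^K / (K.factorial : ℝ) ≤ exp (s+1) :=
    fun K => pow_div_factorial_le_exp' (s+1) (by linarith) K
  rcases le_or_gt N M with hNM | hMN
  · calc |Q s N| ≤ ∏ j ∈ range N, (if j < M then (s+1)/((j:ℝ)+1) else 1) := h1
      _ = ∏ j ∈ range N, ((s+1)/((j:ℝ)+1)) := by
          apply Finset.prod_congr rfl
          intro j hj
          rw [mem_range] at hj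
          simp [show j < M by omega]
      _ = (s+1)^N / N.factorial := hprod N hNM
      _ ≤ exp (s+1) := hexp N
  · calc |Q s N| ≤ ∏ j ∈ range N, (if j < M then (s+1)/((j:ℝ)+1) else 1) := h1
      _ = (∏ j ∈ range M, (if j < M then (s+1)/((j:ℝ)+1) else 1)) *
          (∏ j ∈ Ico M N, (if j < M then (s+1)/((j:ℝ)+1) else 1)) :=
          (Finset.prod_range_mul_prod_Ico _ (le_of_lt hMN)).symm
      _ = ((s+1)^M / M.factorial) * 1 := by
          congr 1
          · rw [← hprod M le_rfl]
            apply Finset.prod_congr rfl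
            intro j hj; rw [mem_range] at hj; simp [hj]
          · apply Finset.prod_eq_one
            intro j hj
            rw [mem_Ico] at hj
            simp [show ¬ j < M by omega]
      _ ≤ exp (s+1) := by rw [mul_one]; exact hexp M

lemma abs_bin_eq_of_ge (s : ℝ) (hs : 0 ≤ s) {n : ℕ} (hn : Nat.floor s + 1 ≤ n) :
    |bin s n| = (-1:ℝ)^(Nat.floor s + 1 + n) * bin s n := by
  set m := Nat.floor s + 1 with hm
  have hsplit : (∏ i ∈ range n, (s - (i:ℝ))) =
      (∏ i ∈ range m, (s - (i:ℝ))) * (∏ i ∈ Ico m n, (s - (i:ℝ))) :=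
    (Finset.prod_range_mul_prod_Ico _ hn).symm
  have hA : 0 ≤ ∏ i ∈ range m, (s - (i:ℝ)) := by
    apply Finset.prod_nonneg
    intro i hi
    rw [mem_range] at hi
    have : (i:ℝ) ≤ s := by
      have : i ≤ Nat.floor s := by omega
      calc (i:ℝ) ≤ (Nat.floor s : ℝ) := by exact_mod_cast this
        _ ≤ s := Nat.floor_le hs
    linarith
  have hB : 0 ≤ ∏ i ∈ Ico m n, ((i:ℝ) - s) := by
    apply Finset.prod_nonneg
    intro i hi
    rw [mem_Ico] at hi
    have h2 : s < (Nat.floor s : ℝ) + 1 := Nat.lt_floor_add_one s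
    have : ((Nat.floor s : ℕ):ℝ) + 1 ≤ (i:ℝ) := by
      have : m ≤ i := hi.1
      rw [hm] at this
      exact_mod_cast Nat.succ_le_of_lt (by omega)
    linarith
  have hneg : (∏ i ∈ Ico m n, (s - (i:ℝ))) = (-1:ℝ)^(n - m) * ∏ i ∈ Ico m n, ((i:ℝ) - s) := by
    rw [show ∏ i ∈ Ico m n, (s - (i:ℝ)) = ∏ i ∈ Ico m n, ((-1) * ((i:ℝ) - s)) from
      Finset.prod_congr rfl (fun i _ => by ring)]
    rw [Finset.prod_mul_distrib, Finset.prod_const, Nat.card_Ico]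
  have hbin : bin s n = (-1:ℝ)^(n - m) *
      ((∏ i ∈ range m, (s - (i:ℝ))) * (∏ i ∈ Ico m n, ((i:ℝ) - s)) / n.factorial) := by
    rw [bin, hsplit, hneg]; ring
  have hc : 0 ≤ (∏ i ∈ range m, (s - (i:ℝ))) * (∏ i ∈ Ico m n, ((i:ℝ) - s)) / n.factorial := by
    positivity
  rw [hbin, abs_mul, abs_pow, abs_neg, abs_one, one_pow, one_mul, abs_of_nonneg hc]
  rw [← mul_assoc, ← pow_add]
  have : m + n + (n - m) = 2 * n := by omega
  rw [this, pow_mul, neg_one_sq, one_pow, one_mul]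

lemma abs_sum_bin_range_le (s : ℝ) (hs : 0 ≤ s) (K : ℕ) :
    |∑ n ∈ range K, (-1:ℝ)^n * bin s n| ≤ exp (s+1) := by
  cases K with
  | zero => simp [le_of_lt (exp_pos _)]
  | succ K => rw [sum_bin_eq_Q]; exact abs_Q_le s hs K

lemma sum_abs_bin_le (s : ℝ) (hs : 0 ≤ s) (N : ℕ) :
    ∑ n ∈ range N, |bin s n| ≤ 3 * exp (s+1) := by
  set m := Nat.floor s + 1 with hm
  have hexp1 : exp s ≤ exp (s+1) := exp_le_exp.mpr (by linarith)
  have hhead : ∀ K, K ≤ m → ∑ n ∈ range K, |bin s n| ≤ exp (s+1) := by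
    intro K hK
    calc ∑ n ∈ range K, |bin s n| ≤ ∑ n ∈ range K, s^n / n.factorial := by
          apply Finset.sum_le_sum
          intro n hn
          rw [mem_range] at hn
          exact abs_bin_le s hs (by omega)
      _ ≤ exp s := Real.sum_le_exp_of_nonneg hs K
      _ ≤ exp (s+1) := hexp1
  rcases le_or_gt N m with hNm | hmN
  · linarith [hhead N hNm, exp_pos (s+1)]
  · have hsplit : ∑ n ∈ range N, |bin s n| =
        ∑ n ∈ range m, |bin s n| + ∑ n ∈ Ico m N, |bin s n| :=
      (Finset.sum_range_add_sum_Ico _ (le_of_lt hmN)).symm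
    have htail : ∑ n ∈ Ico m N, |bin s n| ≤ 2 * exp (s+1) := by
      have h1 : ∑ n ∈ Ico m N, |bin s n| = (-1:ℝ)^m * ∑ n ∈ Ico m N, (-1:ℝ)^n * bin s n := by
        rw [Finset.mul_sum]
        apply Finset.sum_congr rfl
        intro n hn
        rw [mem_Ico] at hn
        rw [abs_bin_eq_of_ge s hs hn.1, pow_add, mul_assoc]
      have h2 : ∑ n ∈ Ico m N, (-1:ℝ)^n * bin s n =
          (∑ n ∈ range N, (-1:ℝ)^n * bin s n) - (∑ n ∈ range m, (-1:ℝ)^n * bin s n) := by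
        rw [eq_sub_iff_add_eq, add_comm]
        exact Finset.sum_range_add_sum_Ico _ (le_of_lt hmN)
      calc ∑ n ∈ Ico m N, |bin s n|
          = (-1:ℝ)^m * ∑ n ∈ Ico m N, (-1:ℝ)^n * bin s n := h1
        _ ≤ |(-1:ℝ)^m * ∑ n ∈ Ico m N, (-1:ℝ)^n * bin s n| := le_abs_self _
        _ = |∑ n ∈ Ico m N, (-1:ℝ)^n * bin s n| := by
            rw [abs_mul, abs_pow, abs_neg, abs_one, one_pow, one_mul]
        _ ≤ |∑ n ∈ range N, (-1:ℝ)^n * bin s n| + |∑ n ∈ range m, (-1:ℝ)^n * bin s n| := by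
            rw [h2]; exact abs_sub _ _
        _ ≤ exp (s+1) + exp (s+1) := add_le_add (abs_sum_bin_range_le s hs N) (abs_sum_bin_range_le s hs m)
        _ = 2 * exp (s+1) := by ring
    have := hhead m le_rfl
    linarith [hsplit]

lemma summable_abs_bin (s : ℝ) (hs : 0 ≤ s) : Summable (fun n => |bin s n|) :=
  summable_of_sum_range_le (fun _ => abs_nonneg _) (sum_abs_bin_le s hs)

lemma tsum_abs_bin_le (s : ℝ) (hs : 0 ≤ s) : ∑' n, |bin s n| ≤ 3 * exp (s+1) :=
  Real.tsum_le_of_sum_range_le (fun _ => abs_nonneg _) (sum_abs_bin_le s hs)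

lemma summable_neg_bin (s : ℝ) (hs : 0 ≤ s) : Summable (fun n => (-1:ℝ)^n * bin s n) := by
  rw [← summable_abs_iff]
  have : (fun n => |(-1:ℝ)^n * bin s n|) = fun n => |bin s n| := by
    funext n; rw [abs_mul, abs_pow, abs_neg, abs_one, one_pow, one_mul]
  rw [this]
  exact summable_abs_bin s hs

lemma tendsto_Q (s : ℝ) (hs : 0 < s) : Tendsto (Q s) atTop (nhds 0) := by
  set m := Nat.floor s + 1 with hm
  have hsm : s < m := by
    have := Nat.lt_floor_add_one s
    push_cast [hm]
    push_cast at this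
    linarith
  set H : ℕ → ℝ := fun N => ∑ j ∈ range N, 1/((j:ℝ)+1) with hH
  have hfac : ∀ j : ℕ, m ≤ j → ((j:ℝ)+1-s)/((j:ℝ)+1) ≤ exp (-(s/((j:ℝ)+1))) := by
    intro j hj
    have hj1 : (0:ℝ) < (j:ℝ)+1 := by positivity
    have : ((j:ℝ)+1-s)/((j:ℝ)+1) = -(s/((j:ℝ)+1)) + 1 := by field_simp; ring
    rw [this]
    exact Real.add_one_le_exp _
  have hfacnn : ∀ j : ℕ, m ≤ j → 0 ≤ ((j:ℝ)+1-s)/((j:ℝ)+1) := by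
    intro j hj
    have hmj : (m:ℝ) ≤ (j:ℝ) := by exact_mod_cast hj
    have hj1 : (0:ℝ) < (j:ℝ)+1 := by positivity
    apply div_nonneg _ (le_of_lt hj1)
    linarith
  have hbound : ∀ N, m ≤ N → |Q s N| ≤ (|Q s m| * exp (s * H m)) * exp (-(s * H N)) := by
    intro N hN
    have hsplit : Q s N = Q s m * ∏ j ∈ Ico m N, ((j:ℝ)+1-s)/((j:ℝ)+1) :=
      (Finset.prod_range_mul_prod_Ico _ hN).symm
    have hprodnn : 0 ≤ ∏ j ∈ Ico m N, ((j:ℝ)+1-s)/((j:ℝ)+1) :=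
      Finset.prod_nonneg (fun j hj => hfacnn j (mem_Ico.mp hj).1)
    have hprodle : ∏ j ∈ Ico m N, ((j:ℝ)+1-s)/((j:ℝ)+1) ≤
        exp (-(s * (H N - H m))) := by
      have : ∏ j ∈ Ico m N, ((j:ℝ)+1-s)/((j:ℝ)+1) ≤
          ∏ j ∈ Ico m N, exp (-(s/((j:ℝ)+1))) := by
        apply Finset.prod_le_prod (fun j hj => hfacnn j (mem_Ico.mp hj).1)
        intro j hj
        exact hfac j (mem_Ico.mp hj).1
      refine this.trans (le_of_eq ?_)
      rw [← Real.exp_sum]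
      congr 1
      have hIco : ∑ j ∈ Ico m N, 1/((j:ℝ)+1) = H N - H m := by
        rw [eq_sub_iff_add_eq, add_comm, hH]
        exact Finset.sum_range_add_sum_Ico _ hN
      rw [← hIco, Finset.mul_sum, ← Finset.sum_neg_distrib]
      apply Finset.sum_congr rfl
      intro j _
      rw [mul_one_div]
    rw [hsplit, abs_mul, abs_of_nonneg hprodnn]
    calc |Q s m| * ∏ j ∈ Ico m N, ((j:ℝ)+1-s)/((j:ℝ)+1)
        ≤ |Q s m| * exp (-(s * (H N - H m))) :=
          mul_le_mul_of_nonneg_left hprodle (abs_nonneg _)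
      _ = (|Q s m| * exp (s * H m)) * exp (-(s * H N)) := by
          rw [show -(s*(H N - H m)) = s * H m + -(s * H N) by ring, Real.exp_add]
          ring
  have hHtop : Tendsto H atTop atTop := Real.tendsto_sum_range_one_div_nat_succ_atTop
  have h1 : Tendsto (fun N => s * H N) atTop atTop := hHtop.const_mul_atTop hs
  have h2 : Tendsto (fun N => -(s * H N)) atTop atBot := tendsto_neg_atTop_atBot.comp h1
  have h3 : Tendsto (fun N => exp (-(s * H N))) atTop (nhds 0) := Real.tendsto_exp_atBot.comp h2
  have h4 : Tendsto (fun N => (|Q s m| * exp (s * H m)) * exp (-(s * H N))) atTop (nhds 0) := by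
    have := h3.const_mul (|Q s m| * exp (s * H m))
    simpa using this
  rw [tendsto_zero_iff_abs_tendsto_zero]
  apply squeeze_zero' (Filter.Eventually.of_forall fun N => abs_nonneg _) ?_ h4
  filter_upwards [eventually_ge_atTop m] with N hN using hbound N hN

lemma tsum_neg_bin_eq_zero (s : ℝ) (hs : 0 < s) : ∑' n, (-1:ℝ)^n * bin s n = 0 := by
  have hsum := summable_neg_bin s (le_of_lt hs)
  have h1 : Tendsto (fun N => ∑ n ∈ range N, (-1:ℝ)^n * bin s n) atTop
      (nhds (∑' n, (-1:ℝ)^n * bin s n)) := hsum.hasSum.tendsto_sum_nat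
  have h2 : Tendsto (fun N : ℕ => ∑ n ∈ range (N+1), (-1:ℝ)^n * bin s n) atTop
      (nhds (∑' n, (-1:ℝ)^n * bin s n)) := by
    exact h1.comp (tendsto_add_atTop_nat 1)
  have h3 : Tendsto (Q s) atTop (nhds (∑' n, (-1:ℝ)^n * bin s n)) := by
    have : (fun N : ℕ => ∑ n ∈ range (N+1), (-1:ℝ)^n * bin s n) = Q s := by
      funext N; exact sum_bin_eq_Q s N
    rwa [this] at h2
  exact tendsto_nhds_unique h3 (tendsto_Q s hs)

lemma tsum_neg_bin_zero : ∑' n, (-1:ℝ)^n * bin 0 n = 1 := by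
  rw [tsum_eq_single 0]
  · simp [bin_zero]
  · intro n hn
    have : bin 0 n = 0 := by
      rw [bin]
      rw [Finset.prod_eq_zero (Finset.mem_range.mpr (Nat.pos_of_ne_zero hn)) (by simp)]
      simp
    rw [this, mul_zero]

lemma log_Gamma_convex {x y θ : ℝ} (hx : 0 < x) (hy : 0 < y) (h0 : 0 ≤ θ) (h1 : θ ≤ 1) :
    Real.log (Real.Gamma ((1-θ)*x + θ*y)) ≤
      (1-θ) * Real.log (Real.Gamma x) + θ * Real.log (Real.Gamma y) := by
  have := Real.convexOn_log_Gamma.2 (Set.mem_Ioi.mpr hx) (Set.mem_Ioi.mpr hy)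
    (by linarith : (0:ℝ) ≤ 1-θ) h0 (by ring : (1-θ) + θ = 1)
  simpa [smul_eq_mul, Function.comp] using this

lemma Gamma_interp_le {x θ : ℝ} (hx : 0 < x) (h0 : 0 ≤ θ) (h1 : θ ≤ 1) :
    Real.Gamma (x + θ) ≤ Real.Gamma x * x ^ θ := by
  have hxθ : 0 < x + θ := by linarith
  have hΓx : 0 < Real.Gamma x := Real.Gamma_pos_of_pos hx
  have hΓx1 : 0 < Real.Gamma (x+1) := Real.Gamma_pos_of_pos (by linarith)
  have hΓxθ : 0 < Real.Gamma (x+θ) := Real.Gamma_pos_of_pos hxθ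
  have hconv := log_Gamma_convex hx (by linarith : (0:ℝ) < x+1) h0 h1
  have hcomb : (1-θ)*x + θ*(x+1) = x + θ := by ring
  rw [hcomb] at hconv
  have key : Real.Gamma (x+θ) ≤ Real.Gamma x ^ (1-θ) * Real.Gamma (x+1) ^ θ := by
    have h2 : Real.Gamma x ^ (1-θ) * Real.Gamma (x+1) ^ θ =
        Real.exp ((1-θ) * Real.log (Real.Gamma x) + θ * Real.log (Real.Gamma (x+1))) := by
      rw [Real.exp_add, Real.rpow_def_of_pos hΓx, Real.rpow_def_of_pos hΓx1]
      ring_nf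
    rw [h2, ← Real.exp_log hΓxθ]
    exact Real.exp_le_exp.mpr hconv
  calc Real.Gamma (x+θ) ≤ Real.Gamma x ^ (1-θ) * Real.Gamma (x+1) ^ θ := key
    _ = Real.Gamma x * x ^ θ := by
        rw [Real.Gamma_add_one (ne_of_gt hx), Real.mul_rpow (le_of_lt hx) (le_of_lt hΓx)]
        rw [show Real.Gamma x ^ (1-θ) * (x ^ θ * Real.Gamma x ^ θ) =
          (Real.Gamma x ^ (1-θ) * Real.Gamma x ^ θ) * x ^ θ by ring]
        rw [← Real.rpow_add hΓx]
        norm_num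

lemma Gamma_interp_ge {x θ : ℝ} (hx : 1 < x) (h0 : 0 ≤ θ) (h1 : θ ≤ 1) :
    Real.Gamma x * (x-1) ^ θ ≤ Real.Gamma (x + θ) := by
  have hx0 : 0 < x := by linarith
  have hx1 : 0 < x - 1 := by linarith
  have hΓx : 0 < Real.Gamma x := Real.Gamma_pos_of_pos hx0
  have hΓxm : 0 < Real.Gamma (x-1) := Real.Gamma_pos_of_pos hx1
  have hΓxθ : 0 < Real.Gamma (x+θ) := Real.Gamma_pos_of_pos (by linarith)
  have hθ1 : (0:ℝ) < 1 + θ := by linarith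
  have hconv := log_Gamma_convex (y := x - 1) (x := x + θ) (θ := θ/(1+θ))
    (by linarith) hx1 (by positivity) (by rw [div_le_one hθ1]; linarith)
  have hcomb : (1 - θ/(1+θ))*(x+θ) + (θ/(1+θ))*(x-1) = x := by
    field_simp
    ring
  rw [hcomb] at hconv
  -- hconv : log Γ x ≤ (1 - θ/(1+θ)) log Γ(x+θ) + (θ/(1+θ)) log Γ(x-1)
  have hGx : Real.log (Real.Gamma x) = Real.log (x-1) + Real.log (Real.Gamma (x-1)) := by
    have hxx := Real.Gamma_add_one (ne_of_gt hx1)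
    rw [show x - 1 + 1 = x by ring] at hxx
    rw [hxx, Real.log_mul (ne_of_gt hx1) (ne_of_gt hΓxm)]
  have key : Real.log (Real.Gamma x) + θ * Real.log (x-1) ≤ Real.log (Real.Gamma (x+θ)) := by
    have h1mθ : 1 - θ/(1+θ) = 1/(1+θ) := by field_simp; ring
    rw [h1mθ] at hconv
    rw [hGx] at hconv ⊢
    have h := mul_le_mul_of_nonneg_left hconv (le_of_lt hθ1)
    have hid : (1+θ) * (1/(1+θ) * Real.log (Real.Gamma (x+θ)) + θ/(1+θ) * Real.log (Real.Gamma (x-1)))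
        = Real.log (Real.Gamma (x+θ)) + θ * Real.log (Real.Gamma (x-1)) := by
      field_simp
    have h2 : (1+θ) * (Real.log (x-1) + Real.log (Real.Gamma (x-1)))
        = Real.log (x-1) + Real.log (Real.Gamma (x-1)) + θ * Real.log (x-1)
          + θ * Real.log (Real.Gamma (x-1)) := by ring
    linarith [h, hid, h2]
  have : Real.exp (Real.log (Real.Gamma x) + θ * Real.log (x-1)) ≤ Real.Gamma (x+θ) := by
    rw [← Real.exp_log hΓxθ]
    exact Real.exp_le_exp.mpr key
  calc Real.Gamma x * (x-1)^θ
      = Real.exp (Real.log (Real.Gamma x) + θ * Real.log (x-1)) := by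
        rw [Real.exp_add, Real.exp_log hΓx, Real.rpow_def_of_pos hx1, mul_comm θ]
    _ ≤ Real.Gamma (x+θ) := this

lemma Gamma_shift_le : ∀ n : ℕ, ∀ c : ℝ, 0 ≤ c → c ≤ n → ∀ x : ℝ, 0 < x →
    Real.Gamma (x + c) ≤ Real.Gamma x * (x + c) ^ c := by
  intro n
  induction n with
  | zero =>
    intro c hc0 hcn x hx
    have : c = 0 := le_antisymm (by exact_mod_cast hcn) hc0
    simp [this]
  | succ n ih =>
    intro c hc0 hcn x hx
    rcases le_or_gt c 1 with hc1 | hc1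
    · calc Real.Gamma (x+c) ≤ Real.Gamma x * x ^ c := Gamma_interp_le hx hc0 hc1
        _ ≤ Real.Gamma x * (x+c) ^ c := by
            apply mul_le_mul_of_nonneg_left _ (le_of_lt (Real.Gamma_pos_of_pos hx))
            exact Real.rpow_le_rpow (le_of_lt hx) (by linarith) hc0
    · have hc1' : 0 ≤ c - 1 := by linarith
      have hcn' : c - 1 ≤ n := by push_cast at hcn ⊢; linarith
      have hxc1 : 0 < x + c - 1 := by linarith
      have step : Real.Gamma (x + c) = (x + c - 1) * Real.Gamma (x + (c-1)) := by
        rw [show x + c = (x + (c-1)) + 1 by ring, Real.Gamma_add_one (by linarith : x + (c-1) ≠ 0)]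
        ring_nf
      rw [step]
      calc (x + c - 1) * Real.Gamma (x + (c-1))
          ≤ (x + c - 1) * (Real.Gamma x * (x + (c-1)) ^ (c-1)) := by
            apply mul_le_mul_of_nonneg_left (ih (c-1) hc1' hcn' x hx) (le_of_lt hxc1)
        _ = Real.Gamma x * ((x + c - 1) * (x + c - 1) ^ (c-1)) := by ring_nf
        _ = Real.Gamma x * (x + c - 1) ^ c := by
            rw [show (x+c-1) * (x+c-1)^(c-1) = (x+c-1)^(1:ℝ) * (x+c-1)^(c-1) by
              rw [Real.rpow_one]]
            rw [← Real.rpow_add hxc1]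
            ring_nf
        _ ≤ Real.Gamma x * (x + c) ^ c := by
            apply mul_le_mul_of_nonneg_left _ (le_of_lt (Real.Gamma_pos_of_pos hx))
            exact Real.rpow_le_rpow (le_of_lt hxc1) (by linarith) hc0

lemma Gamma_shift_ge : ∀ n : ℕ, ∀ c : ℝ, 0 ≤ c → c ≤ n → ∀ x : ℝ, 1 < x →
    Real.Gamma x * (x - 1) ^ c ≤ Real.Gamma (x + c) := by
  intro n
  induction n with
  | zero =>
    intro c hc0 hcn x hx
    have : c = 0 := le_antisymm (by exact_mod_cast hcn) hc0
    simp [this]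
  | succ n ih =>
    intro c hc0 hcn x hx
    have hx1 : 0 < x - 1 := by linarith
    rcases le_or_gt c 1 with hc1 | hc1
    · exact Gamma_interp_ge hx hc0 hc1
    · have hc1' : 0 ≤ c - 1 := by linarith
      have hcn' : c - 1 ≤ n := by push_cast at hcn ⊢; linarith
      have hxc1 : 0 < x + c - 1 := by linarith
      have step : Real.Gamma (x + c) = (x + c - 1) * Real.Gamma (x + (c-1)) := by
        rw [show x + c = (x + (c-1)) + 1 by ring, Real.Gamma_add_one (by linarith : x + (c-1) ≠ 0)]
        ring_nf
      rw [step]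
      calc Real.Gamma x * (x-1)^c
          = (x-1) * (Real.Gamma x * (x-1)^(c-1)) := by
            rw [show (x-1:ℝ)^c = (x-1)^(1:ℝ) * (x-1)^(c-1) by
              rw [← Real.rpow_add hx1]; ring_nf]
            rw [Real.rpow_one]; ring
        _ ≤ (x + c - 1) * (Real.Gamma x * (x-1)^(c-1)) := by
            apply mul_le_mul_of_nonneg_right (by linarith)
            positivity
        _ ≤ (x + c - 1) * Real.Gamma (x + (c-1)) := by
            apply mul_le_mul_of_nonneg_left (ih (c-1) hc1' hcn' x hx) (le_of_lt hxc1)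


lemma Gamma_div_le_of_shift_pos {x d : ℝ} (hx : 0 < x) (hd : 0 ≤ d) :
    Real.Gamma (x + d) / Real.Gamma x ≤ (x + d) ^ d := by
  rw [div_le_iff₀ (Real.Gamma_pos_of_pos hx)]
  calc Real.Gamma (x + d) ≤ Real.Gamma x * (x + d) ^ d :=
        Gamma_shift_le ⌈d⌉₊ d hd (Nat.le_ceil d) x hx
    _ = (x + d) ^ d * Real.Gamma x := by ring

lemma Gamma_div_le_of_shift_neg {x e : ℝ} (hx : 1 < x) (he : 0 ≤ e) :
    Real.Gamma x / Real.Gamma (x + e) ≤ ((x - 1) ^ e)⁻¹ := by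
  have h1 : 0 < (x - 1 : ℝ) ^ e := Real.rpow_pos_of_pos (by linarith) e
  have h2 : Real.Gamma x * (x-1) ^ e ≤ Real.Gamma (x + e) :=
    Gamma_shift_ge ⌈e⌉₊ e he (Nat.le_ceil e) x hx
  have hΓx : 0 < Real.Gamma x := Real.Gamma_pos_of_pos (by linarith)
  calc Real.Gamma x / Real.Gamma (x + e) ≤ Real.Gamma x / (Real.Gamma x * (x-1)^e) :=
        div_le_div_of_nonneg_left (le_of_lt hΓx) (by positivity) h2
    _ = ((x - 1) ^ e)⁻¹ := by
        rw [div_mul_eq_div_div, div_self (ne_of_gt hΓx), one_div]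

lemma summable_majorant_aux (α γ c y : ℝ) (hα0 : 0 < α) (hc : 0 < c) (hy : 0 < y) :
    Summable (fun k : ℕ =>
      |∏ j ∈ Finset.range k,
        Real.Gamma (1 + γ + c + (j:ℝ)*c) / Real.Gamma (1 + γ + α + (j : ℝ) * c)| * y^k /
          Real.Gamma (1 + (k:ℝ)*c)) := by
  set C : ℕ → ℝ := fun k => ∏ j ∈ Finset.range k,
      Real.Gamma (1 + γ + c + (j:ℝ)*c) / Real.Gamma (1 + γ + α + (j : ℝ) * c) with hC
  set b : ℕ → ℝ := fun k => |C k| * y^k / Real.Gamma (1 + (k:ℝ)*c) with hb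
  set E : ℕ → ℝ := fun k =>
    |Real.Gamma (1+γ+c+(k:ℝ)*c) / Real.Gamma (1+γ+α+(k:ℝ)*c)| * y *
      (Real.Gamma (1+(k:ℝ)*c) / Real.Gamma (1+((k:ℝ)+1)*c)) with hE
  have hGB : ∀ k : ℕ, (0:ℝ) < Real.Gamma (1+(k:ℝ)*c) := by
    intro k; apply Real.Gamma_pos_of_pos; positivity
  have hGB' : ∀ k : ℕ, (0:ℝ) < Real.Gamma (1+((k:ℝ)+1)*c) := by
    intro k; apply Real.Gamma_pos_of_pos; positivity
  have hbnn : ∀ k, 0 ≤ b k := by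
    intro k
    rw [hb]
    have := hGB k
    positivity
  have hEnn : ∀ k, 0 ≤ E k := by
    intro k; rw [hE]
    have := hGB k; have := hGB' k
    positivity
  have hstep : ∀ k : ℕ, b (k+1) = b k * E k := by
    intro k
    have h1 : C (k+1) = C k *
        (Real.Gamma (1+γ+c+(k:ℝ)*c) / Real.Gamma (1+γ+α+(k:ℝ)*c)) := by
      rw [hC]
      exact Finset.prod_range_succ _ k
    simp only [hb, hE, h1, abs_mul]
    have h2 : ((k+1:ℕ):ℝ) = (k:ℝ)+1 := by push_cast; ring
    rw [h2]
    have hB := (hGB k).ne'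
    have hB' := (hGB' k).ne'
    field_simp
    ring
  have hA : Tendsto (fun k : ℕ => (k:ℝ)*c) atTop atTop :=
    tendsto_natCast_atTop_atTop.atTop_mul_const hc
  have hCstpos : 0 < y * 2^|c-α| := by positivity
  have hEbound : ∀ᶠ k : ℕ in atTop, E k ≤ (y * 2^|c-α|) * ((k:ℝ)*c)^(-α) := by
    filter_upwards [hA.eventually_ge_atTop (2*(|γ| + c + α + 2))] with k hk
    have hpos0 : (0:ℝ) < 2*(|γ| + c + α + 2) := by positivity
    have hkc : 0 < (k:ℝ)*c := by linarith
    have habs : |γ| + c + α + 2 ≤ (k:ℝ)*c := by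
      have : 0 ≤ |γ| + c + α + 2 := by positivity
      linarith
    have hγ1 : -|γ| ≤ γ := neg_abs_le γ
    have hγ2 : γ ≤ |γ| := le_abs_self γ
    have hNpos : 1 < 1+γ+c+(k:ℝ)*c := by linarith
    have hApos : 1 < 1+γ+α+(k:ℝ)*c := by linarith
    have hGN : 0 < Real.Gamma (1+γ+c+(k:ℝ)*c) := Real.Gamma_pos_of_pos (by linarith)
    have hGA : 0 < Real.Gamma (1+γ+α+(k:ℝ)*c) := Real.Gamma_pos_of_pos (by linarith)
    have hR2 : Real.Gamma (1+(k:ℝ)*c) / Real.Gamma (1+((k:ℝ)+1)*c) ≤ ((k:ℝ)*c)^(-c) := by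
      have harg : 1+((k:ℝ)+1)*c = (1+(k:ℝ)*c) + c := by ring
      rw [harg]
      have h := Gamma_div_le_of_shift_neg (x := 1+(k:ℝ)*c) (e := c)
        (by linarith) (le_of_lt hc)
      have hsimp : (1+(k:ℝ)*c - 1) = (k:ℝ)*c := by ring
      rw [hsimp] at h
      rw [Real.rpow_neg (le_of_lt hkc)]
      exact h
    have hR1 : |Real.Gamma (1+γ+c+(k:ℝ)*c) / Real.Gamma (1+γ+α+(k:ℝ)*c)|
        ≤ 2^|c-α| * ((k:ℝ)*c)^(c-α) := by
      rw [abs_of_pos (div_pos hGN hGA)]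
      rcases le_or_gt α c with hd0 | hd0
      · have hd0' : 0 ≤ c - α := by linarith
        have hNA : 1+γ+c+(k:ℝ)*c = (1+γ+α+(k:ℝ)*c) + (c-α) := by ring
        have h := Gamma_div_le_of_shift_pos (x := 1+γ+α+(k:ℝ)*c) (d := c-α)
          (by linarith) hd0'
        rw [← hNA] at h
        refine h.trans ?_
        have hN2 : 1+γ+c+(k:ℝ)*c ≤ 2*((k:ℝ)*c) := by linarith
        calc (1+γ+c+(k:ℝ)*c) ^ (c-α) ≤ (2*((k:ℝ)*c)) ^ (c-α) :=
              Real.rpow_le_rpow (by linarith) hN2 hd0'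
          _ = 2^(c-α) * ((k:ℝ)*c)^(c-α) := Real.mul_rpow (by norm_num) (le_of_lt hkc)
          _ ≤ 2^|c-α| * ((k:ℝ)*c)^(c-α) := by
              apply mul_le_mul_of_nonneg_right _ (le_of_lt (Real.rpow_pos_of_pos hkc _))
              exact Real.rpow_le_rpow_of_exponent_le (by norm_num) (le_abs_self _)
      · have he : 0 ≤ α - c := by linarith
        have hAN : 1+γ+α+(k:ℝ)*c = (1+γ+c+(k:ℝ)*c) + (α - c) := by ring
        have h := Gamma_div_le_of_shift_neg (x := 1+γ+c+(k:ℝ)*c) (e := α - c) hNpos he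
        rw [← hAN] at h
        refine h.trans ?_
        have hhalf : ((k:ℝ)*c)/2 ≤ (1+γ+c+(k:ℝ)*c) - 1 := by linarith
        have hkc2 : 0 < ((k:ℝ)*c)/2 := by linarith
        calc ((1+γ+c+(k:ℝ)*c - 1) ^ (α - c))⁻¹ = (1+γ+c+(k:ℝ)*c - 1) ^ (c-α) := by
              rw [show c - α = -(α - c) by ring,
                Real.rpow_neg (by linarith : (0:ℝ) ≤ 1+γ+c+(k:ℝ)*c - 1)]
          _ ≤ (((k:ℝ)*c)/2) ^ (c-α) :=
              Real.rpow_le_rpow_of_nonpos hkc2 hhalf (by linarith)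
          _ ≤ 2^|c-α| * ((k:ℝ)*c)^(c-α) := by
              rw [div_rpow (le_of_lt hkc) (by norm_num), div_eq_mul_inv,
                ← Real.rpow_neg (by norm_num : (0:ℝ) ≤ 2), mul_comm]
              apply mul_le_mul_of_nonneg_right _ (le_of_lt (Real.rpow_pos_of_pos hkc _))
              exact Real.rpow_le_rpow_of_exponent_le (by norm_num) (neg_le_abs _)
    have hR2nn : 0 ≤ Real.Gamma (1+(k:ℝ)*c) / Real.Gamma (1+((k:ℝ)+1)*c) :=
      le_of_lt (div_pos (hGB k) (hGB' k))
    calc E k = |Real.Gamma (1+γ+c+(k:ℝ)*c) / Real.Gamma (1+γ+α+(k:ℝ)*c)| * y *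
          (Real.Gamma (1+(k:ℝ)*c) / Real.Gamma (1+((k:ℝ)+1)*c)) := by rw [hE]
      _ ≤ (2^|c-α| * ((k:ℝ)*c)^(c-α)) * y * ((k:ℝ)*c)^(-c) := by
          apply mul_le_mul (mul_le_mul_of_nonneg_right hR1 (le_of_lt hy)) hR2 hR2nn
          positivity
      _ = (y * 2^|c-α|) * (((k:ℝ)*c)^(c-α) * ((k:ℝ)*c)^(-c)) := by ring
      _ = (y * 2^|c-α|) * ((k:ℝ)*c)^(-α) := by
          rw [← Real.rpow_add hkc]
          congr 1
          ring
  have hT : Tendsto (fun k : ℕ => (y * 2^|c-α|) * ((k:ℝ)*c)^(-α)) atTop (nhds 0) := by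
    have h0 := (tendsto_rpow_neg_atTop hα0).comp hA
    have := h0.const_mul (y * 2^|c-α|)
    simpa using this
  have hhalf : ∀ᶠ k : ℕ in atTop, (y * 2^|c-α|) * ((k:ℝ)*c)^(-α) ≤ 1/2 := by
    filter_upwards [hT.eventually (ge_mem_nhds (by norm_num : (0:ℝ) < 1/2))] with k hk
    exact hk
  apply summable_of_ratio_norm_eventually_le (r := 1/2) (by norm_num)
  filter_upwards [hEbound, hhalf] with k h1 h2
  rw [Real.norm_eq_abs, Real.norm_eq_abs, abs_of_nonneg (hbnn (k+1)), abs_of_nonneg (hbnn k)]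
  rw [hstep k]
  calc b k * E k ≤ b k * (1/2) := mul_le_mul_of_nonneg_left (h1.trans h2) (hbnn k)
    _ = 1/2 * b k := by ring

lemma summable_majorant (α β γ y : ℝ) (hα0 : 0 < α) (hβ : β < 0) (hy : 0 < y) :
    Summable (fun k : ℕ => |Ccoef α β γ k| * y^k / Real.Gamma (1 - (k:ℝ)*β)) := by
  have h := summable_majorant_aux α γ (-β) y hα0 (by linarith) hy
  apply h.congr
  intro k
  congr 1
  · congr 1
    · congr 1
      rw [Ccoef]
      apply Finset.prod_congr rfl
      intro j _
      congr 2 <;> ring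
  · congr 1
    ring



end SSTFPPaux

theorem sstfpp_sums_to_one (α β γ ν lam : ℝ) (hα0 : 0 < α) (hα1 : α ≤ 1)
    (hβ : β < 0) (hν0 : 0 < ν) (hν1 : ν ≤ 1) (hlam : 0 < lam) :
    ∀ t : ℝ, 0 < t → (∑' n : ℕ, pSS α β γ ν lam n t) = 1 := by
  intro t ht
  have hx0 : (0:ℝ) < lam ^ ν * t ^ (-β) :=
    mul_pos (Real.rpow_pos_of_pos hlam ν) (Real.rpow_pos_of_pos ht (-β))
  set x0 : ℝ := lam ^ ν * t ^ (-β) with hx0def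
  set a : ℕ → ℝ := fun k => Ccoef α β γ k * (-x0)^k / Real.Gamma (1 - (k:ℝ)*β) with ha
  set f : ℕ → ℕ → ℝ := fun n k => a k * ((-1)^n * bin ((k:ℝ)*ν) n) with hf
  have hsν : ∀ k : ℕ, (0:ℝ) ≤ (k:ℝ)*ν := fun k => by positivity
  have hGpos : ∀ k : ℕ, 0 < Real.Gamma (1 - (k:ℝ)*β) := by
    intro k
    apply Real.Gamma_pos_of_pos
    have h1 : (0:ℝ) ≤ (k:ℝ) := Nat.cast_nonneg k
    nlinarith
  -- Step A
  have hpSS : ∀ n : ℕ, pSS α β γ ν lam n t = ∑' k, f n k := by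
    intro n
    have hnfac : ((n.factorial : ℕ):ℝ) ≠ 0 := by positivity
    rw [pSS]
    have hterm : ∀ k : ℕ,
        Ccoef α β γ k * (-(lam ^ ν) * t ^ (-β)) ^ k / Real.Gamma (1 - (k:ℝ)*β) *
          (Real.Gamma ((k:ℝ)*ν + 1) / Real.Gamma ((k:ℝ)*ν + 1 - n))
        = a k * ((n.factorial : ℝ) * bin ((k:ℝ)*ν) n) := by
      intro k
      have h1 : Real.Gamma ((k:ℝ)*ν + 1) / Real.Gamma ((k:ℝ)*ν + 1 - n)
          = ∏ i ∈ range n, ((k:ℝ)*ν - i) := Gamma_ratio ((k:ℝ)*ν) (hsν k) n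
      have h2 : (-(lam ^ ν) * t ^ (-β)) = -x0 := by rw [hx0def]; ring
      rw [h1, h2, ha, bin]
      rw [mul_div_cancel₀ _ hnfac]
    rw [tsum_congr hterm, ← tsum_mul_left]
    apply tsum_congr
    intro k
    rw [hf]
    field_simp
  -- Step B
  have habsf : ∀ n k : ℕ, |f n k| = |a k| * |bin ((k:ℝ)*ν) n| := by
    intro n k
    rw [hf]
    rw [abs_mul, abs_mul, abs_pow, abs_neg, abs_one, one_pow, one_mul]
  have hrow : ∀ k : ℕ, Summable (fun n => |f n k|) := by
    intro k
    apply Summable.congr ((summable_abs_bin ((k:ℝ)*ν) (hsν k)).mul_left |a k|)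
    intro n
    rw [habsf]
  have habsa : ∀ k : ℕ, |a k| = |Ccoef α β γ k| * x0^k / Real.Gamma (1 - (k:ℝ)*β) := by
    intro k
    rw [ha, abs_div, abs_mul, abs_pow, abs_neg, abs_of_pos hx0,
      abs_of_pos (hGpos k)]
  have hcol_le : ∀ k : ℕ, ∑' n, |f n k| ≤
      (3 * Real.exp 1) * (|Ccoef α β γ k| * (Real.exp ν * x0)^k / Real.Gamma (1 - (k:ℝ)*β)) := by
    intro k
    have h1 : ∑' n, |f n k| = |a k| * ∑' n, |bin ((k:ℝ)*ν) n| := by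
      rw [← tsum_mul_left]
      apply tsum_congr
      intro n
      rw [habsf]
    rw [h1]
    calc |a k| * ∑' n, |bin ((k:ℝ)*ν) n| ≤ |a k| * (3 * Real.exp ((k:ℝ)*ν + 1)) :=
          mul_le_mul_of_nonneg_left (tsum_abs_bin_le _ (hsν k)) (abs_nonneg _)
      _ = (3 * Real.exp 1) * (|Ccoef α β γ k| * (Real.exp ν * x0)^k / Real.Gamma (1 - (k:ℝ)*β)) := by
          rw [habsa k, Real.exp_add, Real.exp_nat_mul, mul_pow]
          ring
  have hmaj : Summable (fun k : ℕ =>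
      (3 * Real.exp 1) * (|Ccoef α β γ k| * (Real.exp ν * x0)^k / Real.Gamma (1 - (k:ℝ)*β))) :=
    (summable_majorant α β γ (Real.exp ν * x0) hα0 hβ (by positivity)).mul_left _
  have hcolsum : Summable (fun k : ℕ => ∑' n, |f n k|) :=
    hmaj.of_nonneg_of_le (fun k => tsum_nonneg (fun n => abs_nonneg _)) hcol_le
  have habsprod : Summable (fun p : ℕ × ℕ => |f p.2 p.1|) :=
    (summable_prod_of_nonneg (fun p => abs_nonneg _)).mpr ⟨fun k => hrow k, hcolsum⟩
  have hprod : Summable (fun p : ℕ × ℕ => f p.2 p.1) := by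
    rw [← summable_abs_iff]
    exact habsprod
  have h₁ : ∀ k : ℕ, Summable (fun n => f n k) := by
    intro k
    rw [← summable_abs_iff]
    exact hrow k
  have h₂ : ∀ n : ℕ, Summable (fun k => f n k) := by
    intro n
    exact hprod.prod_symm.prod_factor n
  -- Step C + D
  have hswap : (∑' n : ℕ, ∑' k : ℕ, f n k) = ∑' k : ℕ, ∑' n : ℕ, f n k :=
    Summable.tsum_comm' (f := fun k n => f n k) hprod h₁ h₂
  calc ∑' n : ℕ, pSS α β γ ν lam n t = ∑' n : ℕ, ∑' k : ℕ, f n k := tsum_congr hpSS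
    _ = ∑' k : ℕ, ∑' n : ℕ, f n k := hswap
    _ = ∑' k : ℕ, a k * ∑' n : ℕ, ((-1:ℝ)^n * bin ((k:ℝ)*ν) n) := by
        apply tsum_congr
        intro k
        rw [← tsum_mul_left]
    _ = 1 := by
        rw [tsum_eq_single 0]
        · have hz : ((0:ℕ):ℝ)*ν = 0 := by push_cast; ring
          rw [hz]
          rw [tsum_neg_bin_zero, mul_one, ha]
          simp [Ccoef, Real.Gamma_one]
        · intro k hk
          have hkν : 0 < (k:ℝ)*ν := by
            have : (1:ℝ) ≤ (k:ℝ) := by exact_mod_cast Nat.one_le_iff_ne_zero.mpr hk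
            nlinarith
          rw [tsum_neg_bin_eq_zero _ hkν, mul_zero]
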